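/- Let ν ≥ 6 be an integer and δ a divisor of ν with 3 ≤ δ ≤ ν − 3. Then there exists a ν × ν matrix M with entries in {0,1} such that: every row of M has exactly δ ones, every column of M has exactly δ ones, M has two identical rows (some i ≠ i' with equal rows), and the columns of M are pairwise distinct. -/

import Mathlib

lemma subval {n : ℕ} [NeZero n] (a b : Fin n) : (a - b).val = (n - b.val + a.val) % n := by
  rw [Fin.sub_def]

lemma modcase (x n : ℕ) (h : x < 2 * n) : (x < n ∧ x % n = x) ∨ (n ≤ x ∧ x % n = x - n) := by
  rcases lt_or_ge x n with h1 | h1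
  · exact Or.inl ⟨h1, Nat.mod_eq_of_lt h1⟩
  · exact Or.inr ⟨h1, by rw [Nat.mod_eq_sub_mod h1, Nat.mod_eq_of_lt (by omega)]⟩

lemma basesum (ν δ : ℕ) [NeZero ν] (hδ : δ ≤ ν) :
    ∑ j : Fin ν, (if j.val < δ then 1 else 0) = δ := by
  rw [Fin.sum_univ_eq_sum_range (fun m => if m < δ then 1 else 0) ν, ← Finset.sum_filter]
  have : Finset.filter (fun m => m < δ) (Finset.range ν) = Finset.range δ := by
    ext m; simp only [Finset.mem_filter, Finset.mem_range]; omega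
  rw [this, Finset.sum_const, Finset.card_range, smul_eq_mul, mul_one]

lemma witA (ν δ : ℕ) [NeZero ν] (hν : 6 ≤ ν) (hδ3 : 3 ≤ δ) (h2δ : 2 * δ ≤ ν)
    (j j' : Fin ν) (hd1 : 1 ≤ (j' - j).val) (hd2 : (j' - j).val ≤ ν - δ) :
    ∃ i : Fin ν, i.val ≠ 1 ∧ i.val ≠ ν - 1 ∧
      ¬(((j - i).val < δ) ↔ ((j' - i).val < δ)) := by
  set d := (j' - j).val with hd
  have hjv : j.val < ν := j.isLt
  have huse : ∀ t : ℕ, ∀ ht : t < ν, (ν - t + j.val) % ν ≠ 1 → (ν - t + j.val) % ν ≠ ν - 1 →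
      ¬((t < δ) ↔ ((d + t) % ν < δ)) →
      ∃ i : Fin ν, i.val ≠ 1 ∧ i.val ≠ ν - 1 ∧
        ¬(((j - i).val < δ) ↔ ((j' - i).val < δ)) := by
    intro t ht h1 h2 h3
    have e1 : (j - (j - ⟨t, ht⟩)).val = t := by rw [sub_sub_cancel]
    have e2 : (j' - (j - ⟨t, ht⟩)).val = (d + t) % ν := by
      have : j' - (j - ⟨t, ht⟩) = (j' - j) + ⟨t, ht⟩ := by rw [sub_sub_eq_add_sub, add_sub_right_comm]
      rw [this, Fin.val_add]
    refine ⟨j - ⟨t, ht⟩, ?_, ?_, ?_⟩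
    · rw [subval]; exact h1
    · rw [subval]; exact h2
    · rw [e1, e2]; exact h3
  rcases lt_or_ge d δ with hcase | hcase
  · rcases eq_or_lt_of_le hd1 with hdeq | hdge2
    · have hdeq : d = 1 := hdeq.symm
      have p1 : ¬(((δ - 1 : ℕ) < δ) ↔ ((d + (δ - 1)) % ν < δ)) := by
        have : (d + (δ - 1)) % ν = δ := by rw [Nat.mod_eq_of_lt (by omega)]; omega
        omega
      have p2 : ¬(((ν - 1 : ℕ) < δ) ↔ ((d + (ν - 1)) % ν < δ)) := by
        have : (d + (ν - 1)) % ν = 0 := by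
          have : d + (ν - 1) = ν := by omega
          rw [this, Nat.mod_self]
        omega
      have m1 := modcase (ν - (δ - 1) + j.val) ν (by omega)
      have m2 := modcase (ν - (ν - 1) + j.val) ν (by omega)
      by_cases c1 : (ν - (δ - 1) + j.val) % ν ≠ 1 ∧ (ν - (δ - 1) + j.val) % ν ≠ ν - 1
      · exact huse (δ - 1) (by omega) c1.1 c1.2 p1
      by_cases c2 : (ν - (ν - 1) + j.val) % ν ≠ 1 ∧ (ν - (ν - 1) + j.val) % ν ≠ ν - 1
      · exact huse (ν - 1) (by omega) c2.1 c2.2 p2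
      exfalso; omega
    · have p1 : ¬(((δ - 1 : ℕ) < δ) ↔ ((d + (δ - 1)) % ν < δ)) := by
        have : (d + (δ - 1)) % ν = d + (δ - 1) := Nat.mod_eq_of_lt (by omega)
        omega
      have p2 : ¬(((ν - 1 : ℕ) < δ) ↔ ((d + (ν - 1)) % ν < δ)) := by
        have : (d + (ν - 1)) % ν = d - 1 := by
          rw [Nat.mod_eq_sub_mod (by omega), Nat.mod_eq_of_lt (by omega)]; omega
        omega
      have p3 : ¬(((ν - 2 : ℕ) < δ) ↔ ((d + (ν - 2)) % ν < δ)) := by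
        have : (d + (ν - 2)) % ν = d - 2 := by
          rw [Nat.mod_eq_sub_mod (by omega), Nat.mod_eq_of_lt (by omega)]; omega
        omega
      have m1 := modcase (ν - (δ - 1) + j.val) ν (by omega)
      have m2 := modcase (ν - (ν - 1) + j.val) ν (by omega)
      have m3 := modcase (ν - (ν - 2) + j.val) ν (by omega)
      by_cases c1 : (ν - (δ - 1) + j.val) % ν ≠ 1 ∧ (ν - (δ - 1) + j.val) % ν ≠ ν - 1
      · exact huse (δ - 1) (by omega) c1.1 c1.2 p1
      by_cases c2 : (ν - (ν - 1) + j.val) % ν ≠ 1 ∧ (ν - (ν - 1) + j.val) % ν ≠ ν - 1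
      · exact huse (ν - 1) (by omega) c2.1 c2.2 p2
      by_cases c3 : (ν - (ν - 2) + j.val) % ν ≠ 1 ∧ (ν - (ν - 2) + j.val) % ν ≠ ν - 1
      · exact huse (ν - 2) (by omega) c3.1 c3.2 p3
      exfalso; omega
  · have p : ∀ t : ℕ, t ≤ 2 → ¬((t < δ) ↔ ((d + t) % ν < δ)) := by
      intro t htle
      have : (d + t) % ν = d + t := Nat.mod_eq_of_lt (by omega)
      omega
    have m1 := modcase (ν - 0 + j.val) ν (by omega)
    have m2 := modcase (ν - 1 + j.val) ν (by omega)
    have m3 := modcase (ν - 2 + j.val) ν (by omega)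
    by_cases c1 : (ν - 0 + j.val) % ν ≠ 1 ∧ (ν - 0 + j.val) % ν ≠ ν - 1
    · exact huse 0 (by omega) c1.1 c1.2 (p 0 (by omega))
    by_cases c2 : (ν - 1 + j.val) % ν ≠ 1 ∧ (ν - 1 + j.val) % ν ≠ ν - 1
    · exact huse 1 (by omega) c2.1 c2.2 (p 1 (by omega))
    by_cases c3 : (ν - 2 + j.val) % ν ≠ 1 ∧ (ν - 2 + j.val) % ν ≠ ν - 1
    · exact huse 2 (by omega) c3.1 c3.2 (p 2 (by omega))
    exfalso; omega

lemma wit (ν δ : ℕ) [NeZero ν] (hν : 6 ≤ ν) (hδ3 : 3 ≤ δ) (h2δ : 2 * δ ≤ ν)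
    (j j' : Fin ν) (hne : j ≠ j') :
    ∃ i : Fin ν, i.val ≠ 1 ∧ i.val ≠ ν - 1 ∧
      ¬(((j - i).val < δ) ↔ ((j' - i).val < δ)) := by
  have hd0 : (j' - j).val ≠ 0 := by
    intro h
    apply hne
    have : j' - j = 0 := Fin.ext (by simpa using h)
    exact (sub_eq_zero.mp this).symm
  have hsum : (j' - j).val + (j - j').val = ν := by
    have e1 := subval j' j
    have e2 := subval j j'
    have m1 := modcase (ν - j.val + j'.val) ν (by have := j.isLt; have := j'.isLt; omega)
    have m2 := modcase (ν - j'.val + j.val) ν (by have := j.isLt; have := j'.isLt; omega)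
    have hjj : j.val ≠ j'.val := fun h => hne (Fin.ext h)
    have := j.isLt; have := j'.isLt
    omega
  rcases le_or_gt (j' - j).val (ν - δ) with hc | hc
  · exact witA ν δ hν hδ3 h2δ j j' (by omega) hc
  · obtain ⟨i, h1, h2, h3⟩ := witA ν δ hν hδ3 h2δ j' j (by omega) (by omega)
    exact ⟨i, h1, h2, fun h => h3 h.symm⟩


def theM (ν δ : ℕ) [NeZero ν] (hδ : δ < ν) : Matrix (Fin ν) (Fin ν) ℕ :=
  fun i j =>
    if i.val = 1 then (if j.val < δ then 1 else 0)
    else if i.val = ν - 1 then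
      (if ((Equiv.swap (0 : Fin ν) ⟨δ, hδ⟩) j - i).val < δ then 1 else 0)
    else (if (j - i).val < δ then 1 else 0)

lemma mytsum (ν δ : ℕ) [NeZero ν] (hδ : δ ≤ ν) (c : Fin ν) :
    ∑ x : Fin ν, (if (x - c).val < δ then 1 else 0) = δ := by
  rw [Fintype.sum_equiv (Equiv.subRight c)
    (fun x => if (x - c).val < δ then 1 else 0)
    (fun x => if x.val < δ then 1 else 0) (fun x => rfl)]
  exact basesum ν δ hδ

lemma colbase (ν δ : ℕ) [NeZero ν] (hδ : δ ≤ ν) (j : Fin ν) :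
    ∑ i : Fin ν, (if (j - i).val < δ then 1 else 0) = δ := by
  rw [Fintype.sum_equiv (Equiv.subLeft j)
    (fun i => if (j - i).val < δ then 1 else 0)
    (fun x => if x.val < δ then 1 else 0) (fun x => rfl)]
  exact basesum ν δ hδ

lemma theM_01 (ν δ : ℕ) [NeZero ν] (hδ : δ < ν) (i j : Fin ν) :
    theM ν δ hδ i j = 0 ∨ theM ν δ hδ i j = 1 := by
  unfold theM
  split_ifs <;> simp

lemma theM_row (ν δ : ℕ) [NeZero ν] (hν : 6 ≤ ν) (hδ : δ < ν) (i : Fin ν) :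
    ∑ j, theM ν δ hδ i j = δ := by
  unfold theM
  by_cases hi1 : i.val = 1
  · simp only [if_pos hi1]
    exact basesum ν δ (by omega)
  by_cases hil : i.val = ν - 1
  · simp only [if_neg hi1, if_pos hil]
    rw [Equiv.sum_comp (Equiv.swap (0 : Fin ν) ⟨δ, hδ⟩)
      (fun x => if (x - i).val < δ then 1 else 0)]
    exact mytsum ν δ (by omega) i
  · simp only [if_neg hi1, if_neg hil]
    exact mytsum ν δ (by omega) i

lemma theM_col (ν δ : ℕ) [NeZero ν] (hν : 6 ≤ ν) (hδ3 : 3 ≤ δ) (h2δ : 2 * δ ≤ ν)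
    (hδν : δ ≤ ν - 3) (hδ : δ < ν) (j : Fin ν) :
    ∑ i, theM ν δ hδ i j = δ := by
  set r1 : Fin ν := ⟨1, by omega⟩ with hr1
  set rl : Fin ν := ⟨ν - 1, by omega⟩ with hrl
  set dδ : Fin ν := ⟨δ, hδ⟩ with hdδ
  have hrl1 : rl ≠ r1 := by
    simp only [hrl, hr1, ne_eq, Fin.mk.injEq]; omega
  have split : ∀ f : Fin ν → ℕ,
      ∑ i, f i = f r1 + f rl + ∑ i ∈ (Finset.univ.erase r1).erase rl, f i := by
    intro f
    rw [← Finset.add_sum_erase _ f (Finset.mem_univ r1),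
        ← Finset.add_sum_erase _ f (Finset.mem_erase.mpr ⟨hrl1, Finset.mem_univ rl⟩)]
    ring
  rw [split (fun i => theM ν δ hδ i j)]
  have e1 : ∑ i ∈ (Finset.univ.erase r1).erase rl, theM ν δ hδ i j =
      ∑ i ∈ (Finset.univ.erase r1).erase rl, (if (j - i).val < δ then 1 else 0) := by
    apply Finset.sum_congr rfl
    intro i hi
    simp only [Finset.mem_erase] at hi
    have h1 : i.val ≠ 1 := fun h => hi.2.1 (Fin.ext h)
    have h2 : i.val ≠ ν - 1 := fun h => hi.1 (Fin.ext h)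
    unfold theM
    rw [if_neg h1, if_neg h2]
  have e2 := split (fun i => if (j - i).val < δ then 1 else 0)
  rw [colbase ν δ (by omega) j] at e2
  rw [e1]
  have hM1 : theM ν δ hδ r1 j = (if j.val < δ then 1 else 0) := by
    unfold theM; rw [if_pos rfl]
  have hMl : theM ν δ hδ rl j =
      (if ((Equiv.swap (0 : Fin ν) dδ) j - rl).val < δ then 1 else 0) := by
    unfold theM; rw [if_neg (show rl.val ≠ 1 by simp only [hrl]; omega), if_pos rfl]
  rw [hM1, hMl]
  have hv1 : (j - r1).val = (ν - 1 + j.val) % ν := subval j r1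
  have hvl : (j - rl).val = (ν - (ν - 1) + j.val) % ν := subval j rl
  have m1 := modcase (ν - 1 + j.val) ν (by have := j.isLt; omega)
  have ml := modcase (ν - (ν - 1) + j.val) ν (by have := j.isLt; omega)
  have claim : (if j.val < δ then 1 else 0) +
      (if ((Equiv.swap (0 : Fin ν) dδ) j - rl).val < δ then 1 else 0) =
      (if (j - r1).val < δ then (1:ℕ) else 0) + (if (j - rl).val < δ then 1 else 0) := by
    by_cases hj0 : j = 0
    · subst hj0
      rw [Equiv.swap_apply_left]
      have hvd : (dδ - rl).val = (ν - (ν - 1) + δ) % ν := subval dδ rl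
      have md := modcase (ν - (ν - 1) + δ) ν (by omega)
      simp only [Fin.val_zero] at m1 ml
      rw [hvd, hv1, hvl, Fin.val_zero]
      split_ifs <;> omega
    by_cases hjd : j = dδ
    · subst hjd
      rw [Equiv.swap_apply_right]
      have hv0 : ((0 : Fin ν) - rl).val = (ν - (ν - 1) + 0) % ν := subval 0 rl
      have m0 := modcase (ν - (ν - 1) + 0) ν (by omega)
      have hvdd : dδ.val = δ := rfl
      simp only [hvdd] at m1 ml
      rw [hv0, hv1, hvl, hvdd]
      split_ifs <;> omega
    · rw [Equiv.swap_apply_of_ne_of_ne hj0 hjd]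
      have hjv0 : j.val ≠ 0 := fun h => hj0 (Fin.ext (by simpa using h))
      have hjvd : j.val ≠ δ := fun h => hjd (Fin.ext (by simpa using h))
      have := j.isLt
      rw [hv1, hvl]
      split_ifs <;> omega
  omega

lemma theM_tworows (ν δ : ℕ) [NeZero ν] (hν : 6 ≤ ν) (hδ : δ < ν) :
    ∃ i i' : Fin ν, i ≠ i' ∧ ∀ j, theM ν δ hδ i j = theM ν δ hδ i' j := by
  refine ⟨⟨0, by omega⟩, ⟨1, by omega⟩, ?_, ?_⟩
  · simp only [ne_eq, Fin.mk.injEq]; omega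
  · intro j
    unfold theM
    rw [if_neg (show (0:ℕ) ≠ 1 by omega), if_neg (show (0:ℕ) ≠ ν - 1 by omega),
      if_pos rfl]
    have : (⟨0, by omega⟩ : Fin ν) = 0 := rfl
    rw [this, sub_zero]

lemma theM_cols (ν δ : ℕ) [NeZero ν] (hν : 6 ≤ ν) (hδ3 : 3 ≤ δ) (h2δ : 2 * δ ≤ ν)
    (hδ : δ < ν) (j j' : Fin ν) (hne : j ≠ j') :
    ∃ i, theM ν δ hδ i j ≠ theM ν δ hδ i j' := by
  obtain ⟨i, h1, h2, h3⟩ := wit ν δ hν hδ3 h2δ j j' hne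
  refine ⟨i, ?_⟩
  unfold theM
  rw [if_neg h1, if_neg h2]
  split_ifs with a b b
  · exact absurd (Iff.intro (fun _ => b) (fun _ => a)) h3
  · simp
  · simp
  · exact absurd (Iff.intro (fun h => absurd h a) (fun h => absurd h b)) h3

theorem stmt_2 (ν δ : ℕ) (hν : 6 ≤ ν) (hδν : δ ∣ ν) (hδ3 : 3 ≤ δ) (hδ : δ ≤ ν - 3) :
    ∃ M : Matrix (Fin ν) (Fin ν) ℕ,
      (∀ i j, M i j = 0 ∨ M i j = 1) ∧
      (∀ i, ∑ j, M i j = δ) ∧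
      (∀ j, ∑ i, M i j = δ) ∧
      (∃ i i' : Fin ν, i ≠ i' ∧ ∀ j, M i j = M i' j) ∧
      (∀ j j' : Fin ν, j ≠ j' → ∃ i, M i j ≠ M i j') := by
  haveI : NeZero ν := ⟨by omega⟩
  have h2δ : 2 * δ ≤ ν := by
    obtain ⟨c, hc⟩ := hδν
    have hc2 : 2 ≤ c := by
      rcases Nat.lt_or_ge c 2 with h | h
      · interval_cases c <;> omega
      · exact h
    calc 2 * δ = δ * 2 := by ring
    _ ≤ δ * c := Nat.mul_le_mul_left δ hc2
    _ = ν := hc.symm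
  exact ⟨theM ν δ (by omega), theM_01 ν δ _, theM_row ν δ hν _,
    theM_col ν δ hν hδ3 h2δ hδ _, theM_tworows ν δ hν _,
    theM_cols ν δ hν hδ3 h2δ _⟩
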